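/- Let I be an index set, L ∈ ℕ, and for each i ∈ I let G_i be a group generated by a finite subset S_i with #S_i ≤ L. Assume the family {(G_i, S_i)}_{i∈I} is uniformly amenable: for every ε > 0 there exist D ∈ ℕ and functions f_i : G_i → [0,∞) (i ∈ I) such that Σ_{γ∈G_i} f_i(γ)² = 1, Σ_{γ∈G_i} (f_i(γ) − f_i(γs))² ≤ ε² for every s ∈ S_i, and the support of each f_i is contained in the word-metric ball B(1_{G_i}, D). Then: for every ε > 0 there exist M > 0 and functions g_i : G_i → [0,∞) (i ∈ I) such that Σ_{γ∈G_i} g_i(γ)² = 1, Σ_{γ∈G_i} (g_i(γ) − g_i(γs))² ≤ ε² for every s ∈ S_i, and Σ_{γ∈G_i} g_i(γ) ≤ M. -/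

import Mathlib

open Pointwise


/-- The word-metric ball `B(1_G, D)` with respect to a generating set `S`:
the set of elements of `G` expressible as a product of at most `D` elements
of `S ∪ S⁻¹`. -/
def wordBall {G : Type*} [Group G] (S : Set G) (D : ℕ) : Set G :=
  {g | ∃ l : List G, l.length ≤ D ∧ (∀ x ∈ l, x ∈ S ∨ x⁻¹ ∈ S) ∧ l.prod = g}

/-- A list product of elements of a finset `T` lies in `T ^ l.length`. -/
lemma list_prod_mem_pow {G : Type*} [Group G] [DecidableEq G] (T : Finset G)
    (l : List G) (hl : ∀ x ∈ l, x ∈ T) : l.prod ∈ T ^ l.length := by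
  induction l with
  | nil => simp
  | cons a l ih =>
      rw [List.prod_cons, List.length_cons, pow_succ']
      exact Finset.mul_mem_mul (hl a List.mem_cons_self)
        (ih fun x hx => hl x (List.mem_cons_of_mem a hx))

theorem stmt_6 {I : Type*} (G : I → Type*) [∀ i, Group (G i)]
    (S : ∀ i, Finset (G i))
    (hgen : ∀ i, Subgroup.closure ((S i : Set (G i))) = ⊤)
    (L : ℕ) (hL : ∀ i, (S i).card ≤ L)
    (h : ∀ ε : ℝ, 0 < ε → ∃ D : ℕ, ∃ f : ∀ i, G i → ℝ, ∀ i,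
      (∀ γ, 0 ≤ f i γ) ∧ (∑' γ, f i γ ^ 2 = 1) ∧
      (∀ s ∈ S i, ∑' γ, (f i γ - f i (γ * s)) ^ 2 ≤ ε ^ 2) ∧
      Function.support (f i) ⊆ wordBall ((S i : Set (G i))) D) :
    ∀ ε : ℝ, 0 < ε → ∃ M : ℝ, 0 < M ∧ ∃ g : ∀ i, G i → ℝ, ∀ i,
      (∀ γ, 0 ≤ g i γ) ∧ (∑' γ, g i γ ^ 2 = 1) ∧
      (∀ s ∈ S i, ∑' γ, (g i γ - g i (γ * s)) ^ 2 ≤ ε ^ 2) ∧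
      Summable (g i) ∧ (∑' γ, g i γ ≤ M) := by
  intro ε hε
  obtain ⟨D, f, hf⟩ := h ε hε
  refine ⟨((2 * L + 1 : ℕ) ^ D : ℝ), by positivity, f, fun i => ?_⟩
  obtain ⟨hpos, hsum, hmix, hsupp⟩ := hf i
  classical
  -- the finset T = {1} ∪ S ∪ S⁻¹
  set T : Finset (G i) := insert 1 ((S i) ∪ (S i).image (·⁻¹)) with hT
  have hTcard : T.card ≤ 2 * L + 1 := by
    calc T.card ≤ ((S i) ∪ (S i).image (·⁻¹)).card + 1 := Finset.card_insert_le _ _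
    _ ≤ ((S i).card + ((S i).image (·⁻¹)).card) + 1 := by
        exact Nat.add_le_add_right (Finset.card_union_le _ _) 1
    _ ≤ (L + L) + 1 := by
        have := Finset.card_image_le (s := S i) (f := (·⁻¹))
        have hLi := hL i
        omega
    _ = 2 * L + 1 := by ring
  have hone : (1 : G i) ∈ T := Finset.mem_insert_self _ _
  -- the support is contained in T ^ D
  have hsub : Function.support (f i) ⊆ (T ^ D : Finset (G i)) := by
    intro γ hγ
    obtain ⟨l, hlen, hmem, hprod⟩ := hsupp hγ
    have : l.prod ∈ T ^ l.length := by
      apply list_prod_mem_pow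
      intro x hx
      rcases hmem x hx with hx' | hx'
      · exact Finset.mem_insert_of_mem (Finset.mem_union_left _ hx')
      · refine Finset.mem_insert_of_mem (Finset.mem_union_right _ ?_)
        exact Finset.mem_image.2 ⟨x⁻¹, hx', inv_inv x⟩
    rw [hprod] at this
    exact Finset.pow_subset_pow_right hone hlen this
  have hzero : ∀ γ ∉ (T ^ D : Finset (G i)), f i γ = 0 := fun γ hγ => by
    by_contra hne
    exact hγ (hsub (Function.mem_support.2 hne))
  have hsummable : Summable (f i) := summable_of_ne_finset_zero hzero
  refine ⟨hpos, hsum, hmix, hsummable, ?_⟩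
  -- bound the sum via Cauchy–Schwarz
  have htsum : ∑' γ, f i γ = ∑ γ ∈ (T ^ D : Finset (G i)), f i γ := tsum_eq_sum hzero
  have htsum2 : ∑ γ ∈ (T ^ D : Finset (G i)), f i γ ^ 2 = 1 := by
    rw [← hsum]
    exact (tsum_eq_sum fun γ hγ => by rw [hzero γ hγ]; ring).symm
  have hcard : ((T ^ D : Finset (G i)).card : ℝ) ≤ ((2 * L + 1 : ℕ) ^ D : ℝ) := by
    have h1 : (T ^ D : Finset (G i)).card ≤ T.card ^ D := Finset.card_pow_le
    have h2 : T.card ^ D ≤ (2 * L + 1) ^ D := Nat.pow_le_pow_left hTcard D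
    exact_mod_cast h1.trans h2
  have hCS : (∑ γ ∈ (T ^ D : Finset (G i)), f i γ) ^ 2
      ≤ ((T ^ D : Finset (G i)).card : ℝ) * ∑ γ ∈ (T ^ D : Finset (G i)), f i γ ^ 2 :=
    sq_sum_le_card_mul_sum_sq
  rw [htsum2, mul_one] at hCS
  rw [htsum]
  set x := ∑ γ ∈ (T ^ D : Finset (G i)), f i γ with hx
  have hx0 : 0 ≤ x := Finset.sum_nonneg fun γ _ => hpos γ
  have hM1 : (1 : ℝ) ≤ ((2 * L + 1 : ℕ) ^ D : ℝ) := by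
    have : 1 ≤ (2 * L + 1) ^ D := Nat.one_le_pow D _ (by omega)
    exact_mod_cast this
  nlinarith [hCS.trans hcard]
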